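/- arXiv:2307.12135 — 2 statements merged into one kernel-verified Lean document; each statement's English description precedes it below -/
import Mathlib

section
/- Generalization of no-regret to approximate best response with multiplicative error: suppose for each t ∈ [T], h_t satisfies L(h_t, q_t) ≤ ε + (1+α)·min_{h*∈H} L(h*, q_t), and the adversary's sequence q_1,...,q_T satisfies max_{q*} Σ_t L(h_t, q*) − Σ_t L(h_t, q_t) ≤ εT + α·max_{q*} Σ_t L(h_t, q*). Then the uniform average h̄ of h_1,...,h_T (as a mixed strategy) satisfies (1−α)·max_{q*} L(h̄, q*) ≤ 2ε + (1+α)·OPT, where OPT = min_{h*∈H} max_{q*} L(h*, q*). -/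
/-- No-regret with approximate best responses and multiplicative error:
if each `h_t` is an `(ε, 1+α)`-approximate best response to `q_t`, and the adversary's
regret satisfies `M − Σ_t L(h_t,q_t) ≤ εT + αM` where `M = max_{q*} Σ_t L(h_t,q*)`,
then the uniform mixture `h̄` of `h_1,…,h_T` satisfies
`(1−α)·max_{q*} L(h̄,q*) ≤ 2ε + (1+α)·OPT`. -/
theorem approx_best_response_dynamics
    (H : Type*) [Fintype H] [Nonempty H] (k T : ℕ) (hk : 0 < k) (hT : 0 < T)
    (L : H → Fin k → ℝ) (hL : ∀ h i, 0 ≤ L h i ∧ L h i ≤ 1)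
    (ε α : ℝ) (hε : 0 < ε) (hα : 0 < α) (hα2 : α < 1 / 2)
    (q : Fin T → Fin k → ℝ) (hq0 : ∀ t i, 0 ≤ q t i) (hq1 : ∀ t, ∑ i, q t i = 1)
    (h : Fin T → H)
    -- approximate best response of the learner at each round
    (hbr : ∀ t, ∀ h' : H,
      (∑ i, q t i * L (h t) i) ≤ ε + (1 + α) * ∑ i, q t i * L h' i)
    -- M is the best cumulative payoff of the adversary in hindsight
    (M : ℝ) (hM : IsGreatest (Set.range fun i : Fin k => ∑ t, L (h t) i) M)
    -- adversary's regret bound with multiplicative error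
    (hadv : M - (∑ t, ∑ i, q t i * L (h t) i) ≤ ε * T + α * M) :
    -- OPT is below `max_i L(h', i)` for every pure strategy `h'`, so it suffices to
    -- bound against each `h'` via its worst-case loss `N`.
    ∀ q' : Fin k → ℝ, (∀ i, 0 ≤ q' i) → (∑ i, q' i = 1) →
    ∀ h' : H, ∀ N : ℝ, IsGreatest (Set.range fun i : Fin k => L h' i) N →
      (1 - α) * (∑ i, q' i * ((1 / T : ℝ) * ∑ t, L (h t) i)) ≤ 2 * ε + (1 + α) * N := by
  intro q' hq'0 hq'1 h' N hN
  have hTpos : (0:ℝ) < T := by exact_mod_cast hT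
  have hS : ∀ i : Fin k, ∑ t, L (h t) i ≤ M := fun i => hM.2 ⟨i, rfl⟩
  -- mixture loss is at most M/T
  have hmix : (∑ i, q' i * ((1 / T : ℝ) * ∑ t, L (h t) i)) ≤ M / T := by
    calc (∑ i, q' i * ((1 / T : ℝ) * ∑ t, L (h t) i))
        ≤ ∑ i, q' i * ((1 / T : ℝ) * M) := by
          apply Finset.sum_le_sum
          intro i _
          exact mul_le_mul_of_nonneg_left
            (mul_le_mul_of_nonneg_left (hS i) (by positivity)) (hq'0 i)
      _ = M / T := by
          rw [← Finset.sum_mul, hq'1, one_mul]; ring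
  -- per-round bound via approximate best response and N
  have hround : ∀ t, (∑ i, q t i * L (h t) i) ≤ ε + (1 + α) * N := by
    intro t
    refine (hbr t h').trans ?_
    have : (∑ i, q t i * L h' i) ≤ N := by
      calc (∑ i, q t i * L h' i) ≤ ∑ i, q t i * N := by
            apply Finset.sum_le_sum
            intro i _
            exact mul_le_mul_of_nonneg_left (hN.2 ⟨i, rfl⟩) (hq0 t i)
        _ = N := by rw [← Finset.sum_mul, hq1, one_mul]
    nlinarith [this]
  have hsum : (∑ t, ∑ i, q t i * L (h t) i) ≤ (ε + (1 + α) * N) * T := by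
    calc (∑ t, ∑ i, q t i * L (h t) i) ≤ ∑ _t : Fin T, (ε + (1 + α) * N) :=
          Finset.sum_le_sum fun t _ => hround t
      _ = (ε + (1 + α) * N) * T := by
          rw [Finset.sum_const, Finset.card_univ, Fintype.card_fin, nsmul_eq_mul]; ring
  -- combine: (1-α) M ≤ 2εT + (1+α)NT
  have hkey : (1 - α) * M ≤ (2 * ε + (1 + α) * N) * T := by nlinarith
  have h1α : (0:ℝ) < 1 - α := by linarith
  calc (1 - α) * (∑ i, q' i * ((1 / T : ℝ) * ∑ t, L (h t) i))
      ≤ (1 - α) * (M / T) := by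
        exact mul_le_mul_of_nonneg_left hmix (le_of_lt h1α)
    _ ≤ 2 * ε + (1 + α) * N := by
        rw [mul_div_assoc']
        exact (div_le_iff₀ hTpos).mpr hkey
end

section
/- ε-optimality of approximate equilibrium strategy transfers to every individual distribution: if p̄ ∈ Δ(H) satisfies max over 2-smooth mixtures P ∈ (Δ(D))₂ of L_P(p̄) ≤ OPT' + ε, where OPT' = min_{p ∈ Δ(H)} max_{P ∈ (Δ(D))₂} L_P(p), then there exists a subset D' ⊆ D of size at least |D|/2 such that for all D ∈ D', L_D(p̄) ≤ OPT' + ε; and furthermore OPT' ≤ min_{p ∈ Δ(H)} max_{D ∈ D} L_D(p). -/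
open Finset

/-- If `p̄` is `ε`-optimal against all 2-smooth mixtures, i.e.
`L_P(p̄) ≤ OPT' + ε` for every 2-smooth `P`, where `OPT'` is the min over mixtures `p`
of the max over 2-smooth `P` of `L_P(p)` (here we use that `OPT' ≤ max_P L_P(p)` for
every `p`, witnessed by a smooth `P`), then at least half the distributions `D` satisfy
`L_D(p̄) ≤ OPT' + ε`, and `OPT' ≤ min_p max_{D} L_D(p)`. -/
theorem smooth_optimality_transfers
    (H : Type*) [Fintype H] (ι : Type*) [Fintype ι]
    (k : ℕ) (hk : Fintype.card ι = k) (hk0 : 0 < k)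
    (L : H → ι → ℝ) (hL : ∀ h D, 0 ≤ L h D ∧ L h D ≤ 1)
    (ε : ℝ) (hε : 0 ≤ ε)
    (pbar : H → ℝ) (hpbar0 : ∀ h, 0 ≤ pbar h) (hpbar1 : ∑ h, pbar h = 1)
    (OPT' : ℝ)
    -- `p̄` is `ε`-optimal against every 2-smooth mixture `P`
    (hopt : ∀ P : ι → ℝ, (∀ D, 0 ≤ P D ∧ P D ≤ 2 / k) → (∑ D, P D = 1) →
      (∑ D, P D * ∑ h, pbar h * L h D) ≤ OPT' + ε)
    -- `OPT'` is a lower bound on the smooth worst case of every mixture `p`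
    (hOPTle : ∀ p : H → ℝ, (∀ h, 0 ≤ p h) → (∑ h, p h = 1) →
      ∃ P : ι → ℝ, (∀ D, 0 ≤ P D ∧ P D ≤ 2 / k) ∧ (∑ D, P D = 1) ∧
        OPT' ≤ ∑ D, P D * ∑ h, p h * L h D) :
    (∃ D' : Finset ι, k ≤ 2 * D'.card ∧
      ∀ D ∈ D', (∑ h, pbar h * L h D) ≤ OPT' + ε) ∧
    (∀ p : H → ℝ, (∀ h, 0 ≤ p h) → (∑ h, p h = 1) →
      ∃ D : ι, OPT' ≤ ∑ h, p h * L h D) := by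
  constructor
  · -- majority part
    classical
    set f : ι → ℝ := fun D => ∑ h, pbar h * L h D with hf
    refine ⟨univ.filter (fun D => f D ≤ OPT' + ε), ?_, fun D hD => (mem_filter.mp hD).2⟩
    by_contra hlt
    push_neg at hlt
    set B : Finset ι := univ.filter (fun D => ¬ f D ≤ OPT' + ε) with hB
    have hcard : (univ.filter (fun D => f D ≤ OPT' + ε)).card + B.card = k := by
      rw [hB, Finset.card_filter_add_card_filter_not, Finset.card_univ, hk]
    have hkB : k ≤ 2 * B.card := by omega
    have hBpos : 0 < B.card := by omega
    have hBcardpos : (0 : ℝ) < (B.card : ℝ) := by exact_mod_cast hBpos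
    set P : ι → ℝ := fun D => if D ∈ B then ((B.card : ℝ))⁻¹ else 0 with hP
    have hPsum : ∑ D, P D = 1 := by
      rw [hP]
      rw [Finset.sum_ite_mem, Finset.univ_inter, Finset.sum_const, nsmul_eq_mul]
      field_simp
    have hPbd : ∀ D, 0 ≤ P D ∧ P D ≤ 2 / k := by
      intro D
      constructor
      · rw [hP]; positivity
      · rw [hP]
        have h2k : (0:ℝ) < 2 / k := by positivity
        by_cases hD : D ∈ B
        · simp only [hD, if_true]
          rw [inv_le_iff_one_le_mul₀ hBcardpos, div_mul_eq_mul_div, le_div_iff₀ (by exact_mod_cast hk0)]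
          calc (1:ℝ) * (k:ℝ) = (k:ℝ) := one_mul _
          _ ≤ 2 * B.card := by exact_mod_cast hkB
        · simp [hD, le_of_lt h2k]
    have := hopt P hPbd hPsum
    have hgt : OPT' + ε < ∑ D, P D * f D := by
      have : ∑ D, P D * f D = ∑ D ∈ B, ((B.card : ℝ))⁻¹ * f D := by
        rw [hP]
        simp only [ite_mul, zero_mul]
        rw [Finset.sum_ite_mem, Finset.univ_inter]
      rw [this]
      have hsum : ∑ _D ∈ B, ((B.card : ℝ))⁻¹ * (OPT' + ε) = OPT' + ε := by
        rw [Finset.sum_const, nsmul_eq_mul]; field_simp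
      calc OPT' + ε = ∑ _D ∈ B, ((B.card : ℝ))⁻¹ * (OPT' + ε) := hsum.symm
      _ < ∑ D ∈ B, ((B.card : ℝ))⁻¹ * f D := by
          apply Finset.sum_lt_sum_of_nonempty
          · exact Finset.card_pos.mp hBpos
          · intro i hi
            have : OPT' + ε < f i := not_le.mp (Finset.mem_filter.mp hi).2
            exact mul_lt_mul_of_pos_left this (by positivity)
    linarith
  · intro p hp0 hp1
    obtain ⟨P, hPbd, hPsum, hle⟩ := hOPTle p hp0 hp1
    by_contra hcon
    push_neg at hcon
    have hlt : ∑ D, P D * ∑ h, p h * L h D < OPT' := by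
      obtain ⟨D0, hD0⟩ : ∃ D0, 0 < P D0 := by
        by_contra hcon2
        push_neg at hcon2
        have : ∑ D, P D = 0 :=
          Finset.sum_eq_zero (fun D _ => le_antisymm (hcon2 D) (hPbd D).1)
        rw [hPsum] at this; norm_num at this
      calc ∑ D, P D * ∑ h, p h * L h D < ∑ D, P D * OPT' := by
            apply Finset.sum_lt_sum
            · exact fun i _ => mul_le_mul_of_nonneg_left (le_of_lt (hcon i)) (hPbd i).1
            · exact ⟨D0, Finset.mem_univ D0, mul_lt_mul_of_pos_left (hcon D0) hD0⟩
      _ = OPT' := by rw [← Finset.sum_mul, hPsum, one_mul]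
    linarith
end
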